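/- Let ρ and σ be quantum states on ℂ^d with supp(ρ) = supp(σ), let m ≥ 1, and let t₁,…,t_m ∈ [0,1] and w₁,…,w_m > 0 be such that the function r_m(x) := (1/ln 2)·Σ_{j=1}^m w_j f_{t_j}(x) satisfies, for all x > 0, −r_m(x) − (1/(m² ln 2))·(1/x + x − 2) ≤ −log₂ x ≤ −r_m(x). Then 0 ≤ D_{−r_m}(ρ‖σ) − D(ρ‖σ) ≤ (Q₀(ρ‖σ) + Q₂(ρ‖σ) − 2)/(m² ln 2), where D_{−r_m}(ρ‖σ) = −Σ_{j=1}^m (w_j/ln 2)·D_{f_{t_j}}(ρ‖σ), Q₀(ρ‖σ) = tr[ρ⁰σ] with ρ⁰ the projection onto supp(ρ), and Q₂(ρ‖σ) = tr[ρ² σ⁺] with σ⁺ the Moore–Penrose pseudo-inverse of σ. -/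

import Mathlib

noncomputable section

namespace QRE

open scoped ComplexOrder

open Matrix

variable {d : ℕ}

/-- The rank-one projector `|u⟩⟨u|` associated with a vector `u ∈ ℂ^d`. -/
def rankOne (u : EuclideanSpace ℂ (Fin d)) : Matrix (Fin d) (Fin d) ℂ :=
  Matrix.of fun i j => u i * (starRingEnd ℂ) (u j)

/-- Functional calculus on the support of a Hermitian matrix: apply `g` to the
positive eigenvalues, and `0` to the rest. -/
def matFun (g : ℝ → ℝ) {A : Matrix (Fin d) (Fin d) ℂ} (hA : A.IsHermitian) :
    Matrix (Fin d) (Fin d) ℂ :=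
  ∑ j, (if 0 < hA.eigenvalues j then (g (hA.eigenvalues j) : ℂ) else 0) •
    rankOne (hA.eigenvectorBasis j)

/-- The orthogonal projection onto the support (column space) of a Hermitian matrix. -/
def suppProj {A : Matrix (Fin d) (Fin d) ℂ} (hA : A.IsHermitian) :
    Matrix (Fin d) (Fin d) ℂ :=
  matFun (fun _ => 1) hA

/-- The standard quantum `f`-divergence (for `supp ρ ⊆ supp σ`, where the `f(0⁺)` term
vanishes): `D_f(ρ‖σ) = Σ_{j : η_j > 0} Σ_{k : μ_k > 0} η_j f(μ_k/η_j) tr[P_j Q_k]`. -/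
def Df (f : ℝ → ℝ) {ρ σ : Matrix (Fin d) (Fin d) ℂ}
    (hρ : ρ.IsHermitian) (hσ : σ.IsHermitian) : ℝ :=
  ∑ j, ∑ k,
    if 0 < hρ.eigenvalues j ∧ 0 < hσ.eigenvalues k then
      hρ.eigenvalues j * f (hσ.eigenvalues k / hρ.eigenvalues j) *
        (Matrix.trace (rankOne (hρ.eigenvectorBasis j) *
          rankOne (hσ.eigenvectorBasis k))).re
    else 0

/-- `f_t(x) = (x-1)/(t(x-1)+1)`. -/
def ft (t x : ℝ) : ℝ := (x - 1) / (t * (x - 1) + 1)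

/-- A quantum state: positive semidefinite with unit trace. -/
def IsState (ρ : Matrix (Fin d) (Fin d) ℂ) : Prop := ρ.PosSemidef ∧ ρ.trace = 1

/-- The Umegaki relative entropy `tr[ρ (log₂ ρ − log₂ σ)]` (logs on the supports). -/
def relEnt {ρ σ : Matrix (Fin d) (Fin d) ℂ} (hρ : ρ.IsHermitian) (hσ : σ.IsHermitian) : ℝ :=
  (Matrix.trace (ρ * (matFun (Real.logb 2) hρ - matFun (Real.logb 2) hσ))).re

/-- `Q_α(ρ‖σ) = tr[ρ^α σ^{1-α}]`, matrix powers by functional calculus on the support. -/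
def Qalpha (α : ℝ) {ρ σ : Matrix (Fin d) (Fin d) ℂ}
    (hρ : ρ.IsHermitian) (hσ : σ.IsHermitian) : ℝ :=
  (Matrix.trace (matFun (fun y => y ^ α) hρ * matFun (fun y => y ^ (1 - α)) hσ)).re

/-- `Q₀(ρ‖σ) = tr[ρ⁰ σ]`. -/
def Qzero {ρ : Matrix (Fin d) (Fin d) ℂ} (hρ : ρ.IsHermitian)
    (σ : Matrix (Fin d) (Fin d) ℂ) : ℝ :=
  (Matrix.trace (suppProj hρ * σ)).re

/-- `Q₂(ρ‖σ) = tr[ρ² σ⁺]`, with `σ⁺` the Moore–Penrose pseudo-inverse of `σ`. -/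
def Qtwo (ρ : Matrix (Fin d) (Fin d) ℂ) {σ : Matrix (Fin d) (Fin d) ℂ}
    (hσ : σ.IsHermitian) : ℝ :=
  (Matrix.trace (ρ * ρ * matFun (fun y => y⁻¹) hσ)).re

lemma trace_rankOne_mul_rankOne (u v : EuclideanSpace ℂ (Fin d)) :
    Matrix.trace (rankOne u * rankOne v) = (inner ℂ u v : ℂ) * inner ℂ v u := by
  simp only [Matrix.trace, Matrix.diag, Matrix.mul_apply, rankOne, Matrix.of_apply,
    PiLp.inner_apply, RCLike.inner_apply, Finset.sum_mul_sum]
  rw [Finset.sum_comm]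
  congr 1; ext i; congr 1; ext m; ring

lemma trace_rankOne_mul_rankOne' (u v : EuclideanSpace ℂ (Fin d)) :
    Matrix.trace (rankOne u * rankOne v) = (Complex.normSq (inner ℂ u v : ℂ) : ℂ) := by
  rw [trace_rankOne_mul_rankOne, ← inner_conj_symm v u, Complex.mul_conj]

lemma trace_rankOne (u : EuclideanSpace ℂ (Fin d)) :
    Matrix.trace (rankOne u) = (inner ℂ u u : ℂ) := by
  simp only [Matrix.trace, Matrix.diag, rankOne, Matrix.of_apply, PiLp.inner_apply,
    RCLike.inner_apply]

lemma sum_rankOne_basis (b : OrthonormalBasis (Fin d) ℂ (EuclideanSpace ℂ (Fin d))) :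
    ∑ j, rankOne (b j) = (1 : Matrix (Fin d) (Fin d) ℂ) := by
  ext i l
  have h := b.sum_inner_mul_inner (EuclideanSpace.single i (1:ℂ)) (EuclideanSpace.single l (1:ℂ))
  simp only [EuclideanSpace.inner_single_left, EuclideanSpace.inner_single_right,
    _root_.map_one, one_mul, mul_one] at h
  simp only [Matrix.sum_apply, rankOne, Matrix.of_apply]
  rw [Matrix.one_apply]
  rw [h]
  by_cases hil : i = l
  · simp [hil, EuclideanSpace.single_apply]
  · simp [hil, EuclideanSpace.single_apply]

lemma mul_rankOne_eigen {A : Matrix (Fin d) (Fin d) ℂ} (hA : A.IsHermitian) (j : Fin d) :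
    A * rankOne (hA.eigenvectorBasis j)
      = (hA.eigenvalues j : ℂ) • rankOne (hA.eigenvectorBasis j) := by
  ext i l
  have h : ∑ m, A i m * (hA.eigenvectorBasis j) m
      = (hA.eigenvalues j : ℂ) * (hA.eigenvectorBasis j) i := by
    have h0 := congrFun (hA.mulVec_eigenvectorBasis j) i
    simpa [Matrix.mulVec, dotProduct, Complex.real_smul] using h0
  simp only [Matrix.mul_apply, rankOne, Matrix.of_apply, Matrix.smul_apply, smul_eq_mul]
  have h1 : ∑ m, A i m * ((hA.eigenvectorBasis j) m * (starRingEnd ℂ) ((hA.eigenvectorBasis j) l))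
      = (∑ m, A i m * (hA.eigenvectorBasis j) m) * (starRingEnd ℂ) ((hA.eigenvectorBasis j) l) := by
    rw [Finset.sum_mul]; exact Finset.sum_congr rfl fun m _ => by ring
  rw [h1, h]; ring

lemma spectral {A : Matrix (Fin d) (Fin d) ℂ} (hA : A.IsHermitian) :
    A = ∑ j, (hA.eigenvalues j : ℂ) • rankOne (hA.eigenvectorBasis j) := by
  conv_lhs => rw [← mul_one A, ← sum_rankOne_basis hA.eigenvectorBasis]
  rw [Finset.mul_sum]
  exact Finset.sum_congr rfl fun j _ => mul_rankOne_eigen hA j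

lemma rankOne_mul_rankOne_basis (b : OrthonormalBasis (Fin d) ℂ (EuclideanSpace ℂ (Fin d)))
    (j k : Fin d) :
    rankOne (b j) * rankOne (b k) = if j = k then rankOne (b j) else 0 := by
  ext i l
  simp only [Matrix.mul_apply, rankOne, Matrix.of_apply]
  have h1 : ∑ m, b j i * (starRingEnd ℂ) (b j m) * (b k m * (starRingEnd ℂ) (b k l))
      = (b j i * (starRingEnd ℂ) (b k l)) * ∑ m, (starRingEnd ℂ) (b j m) * b k m := by
    rw [Finset.mul_sum]; exact Finset.sum_congr rfl fun m _ => by ring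
  have h2 : (∑ m, (starRingEnd ℂ) (b j m) * b k m) = (inner ℂ (b j) (b k) : ℂ) := by
    simp [PiLp.inner_apply, RCLike.inner_apply, mul_comm]
  rw [h1, h2, orthonormal_iff_ite.mp b.orthonormal]
  by_cases h : j = k <;> simp [h]

lemma sq_spectral {A : Matrix (Fin d) (Fin d) ℂ} (hA : A.IsHermitian) :
    A * A = ∑ j, ((hA.eigenvalues j : ℂ) ^ 2) • rankOne (hA.eigenvectorBasis j) := by
  nth_rewrite 2 [spectral hA]
  rw [Finset.mul_sum]
  refine Finset.sum_congr rfl fun j _ => ?_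
  rw [mul_smul_comm, mul_rankOne_eigen, smul_smul, sq]

lemma trace_re_expand (a b : Fin d → ℝ) (u v : Fin d → EuclideanSpace ℂ (Fin d)) :
    (Matrix.trace ((∑ j, (a j : ℂ) • rankOne (u j)) * (∑ k, (b k : ℂ) • rankOne (v k)))).re
      = ∑ j, ∑ k, a j * b k * (Matrix.trace (rankOne (u j) * rankOne (v k))).re := by
  rw [Finset.sum_mul_sum, Matrix.trace_sum]
  rw [Complex.re_sum]
  refine Finset.sum_congr rfl fun j _ => ?_
  rw [Matrix.trace_sum, Complex.re_sum]
  refine Finset.sum_congr rfl fun k _ => ?_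
  rw [smul_mul_smul_comm, Matrix.trace_smul, trace_rankOne_mul_rankOne']
  push_cast
  simp [smul_eq_mul, ← Complex.ofReal_mul]

lemma sum_trace_rankOne_basis (b : OrthonormalBasis (Fin d) ℂ (EuclideanSpace ℂ (Fin d)))
    (u : EuclideanSpace ℂ (Fin d)) (hu : ‖u‖ = 1) :
    ∑ k, (Matrix.trace (rankOne u * rankOne (b k))).re = 1 := by
  have h : ∑ k, Matrix.trace (rankOne u * rankOne (b k)) = (inner ℂ u u : ℂ) := by
    simp only [trace_rankOne_mul_rankOne]
    exact b.sum_inner_mul_inner u u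
  rw [← Complex.re_sum, h, inner_self_eq_norm_sq_to_K]
  simp [hu]

lemma inner_eigen_zero {ρ σ : Matrix (Fin d) (Fin d) ℂ} (hρ : ρ.PosSemidef) (hσ : σ.PosSemidef)
    (hsupp : LinearMap.range ρ.mulVecLin = LinearMap.range σ.mulVecLin) (j k : Fin d)
    (hj : 0 < hρ.1.eigenvalues j) (hk : ¬ 0 < hσ.1.eigenvalues k) :
    (inner ℂ (hσ.1.eigenvectorBasis k) (hρ.1.eigenvectorBasis j) : ℂ) = 0 := by
  have hk0 : hσ.1.eigenvalues k = 0 := le_antisymm (not_lt.1 hk) (hσ.eigenvalues_nonneg k)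
  have hσv : σ *ᵥ ⇑(hσ.1.eigenvectorBasis k) = 0 := by
    rw [hσ.1.mulVec_eigenvectorBasis, hk0]; simp
  have hmem : (⇑(hρ.1.eigenvectorBasis j) : Fin d → ℂ) ∈ LinearMap.range σ.mulVecLin := by
    rw [← hsupp]
    refine ⟨((hρ.1.eigenvalues j : ℂ)⁻¹) • ⇑(hρ.1.eigenvectorBasis j), ?_⟩
    rw [_root_.map_smul, Matrix.mulVecLin_apply, hρ.1.mulVec_eigenvectorBasis]
    funext i
    simp only [Pi.smul_apply, smul_eq_mul, Complex.real_smul]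
    rw [← mul_assoc, inv_mul_cancel₀ (by exact_mod_cast hj.ne')]
    simp
  obtain ⟨y, hy⟩ := hmem
  have key : (inner ℂ (hσ.1.eigenvectorBasis k) (hρ.1.eigenvectorBasis j) : ℂ)
      = ∑ m, (starRingEnd ℂ) ((σ *ᵥ ⇑(hσ.1.eigenvectorBasis k)) m) * y m := by
    rw [PiLp.inner_apply]
    simp only [RCLike.inner_apply, mul_comm _ ((starRingEnd ℂ) _)]
    have hrep : ∀ i, (hρ.1.eigenvectorBasis j) i = (σ *ᵥ y) i := fun i =>
      (congrFun hy i).symm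
    calc ∑ i, (starRingEnd ℂ) ((hσ.1.eigenvectorBasis k) i) * (hρ.1.eigenvectorBasis j) i
        = ∑ i, (starRingEnd ℂ) ((hσ.1.eigenvectorBasis k) i) * ∑ m, σ i m * y m := by
          refine Finset.sum_congr rfl fun i _ => ?_
          rw [hrep i]; rfl
      _ = ∑ i, ∑ m, (starRingEnd ℂ) ((hσ.1.eigenvectorBasis k) i) * (σ i m * y m) := by
          simp [Finset.mul_sum]
      _ = ∑ m, ∑ i, (starRingEnd ℂ) ((hσ.1.eigenvectorBasis k) i) * (σ i m * y m) :=
          Finset.sum_comm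
      _ = ∑ m, (starRingEnd ℂ) ((σ *ᵥ ⇑(hσ.1.eigenvectorBasis k)) m) * y m := by
          refine Finset.sum_congr rfl fun m _ => ?_
          simp only [Matrix.mulVec, dotProduct, map_sum, Finset.sum_mul,
            RingHom.map_mul, RCLike.star_def, Complex.conj_conj]
          refine Finset.sum_congr rfl fun i _ => ?_
          have h2 : (starRingEnd ℂ) (σ m i) = σ i m := hσ.1.apply i m
          rw [h2]
          ring
  rw [key, hσv]
  simp

/-- weights-form double sum. -/
def S (η μ : Fin d → ℝ) (c : Fin d → Fin d → ℝ) (φ : ℝ → ℝ) : ℝ :=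
  ∑ j, ∑ k, if 0 < η j ∧ 0 < μ k then η j * φ (μ k / η j) * c j k else 0

def cMat {ρ σ : Matrix (Fin d) (Fin d) ℂ} (hρ : ρ.IsHermitian) (hσ : σ.IsHermitian)
    (j k : Fin d) : ℝ :=
  (Matrix.trace (rankOne (hρ.eigenvectorBasis j) * rankOne (hσ.eigenvectorBasis k))).re

lemma cMat_nonneg {ρ σ : Matrix (Fin d) (Fin d) ℂ} (hρ : ρ.IsHermitian) (hσ : σ.IsHermitian)
    (j k : Fin d) : 0 ≤ cMat hρ hσ j k := by
  rw [cMat, trace_rankOne_mul_rankOne', Complex.ofReal_re]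
  exact Complex.normSq_nonneg _

lemma Df_eq_S (f : ℝ → ℝ) {ρ σ : Matrix (Fin d) (Fin d) ℂ}
    (hρ : ρ.IsHermitian) (hσ : σ.IsHermitian) :
    Df f hρ hσ = S hρ.eigenvalues hσ.eigenvalues (cMat hρ hσ) f := rfl

lemma matFun_eq (g : ℝ → ℝ) {A : Matrix (Fin d) (Fin d) ℂ} (hA : A.IsHermitian) :
    matFun g hA = ∑ j, ((if 0 < hA.eigenvalues j then g (hA.eigenvalues j) else 0 : ℝ) : ℂ) •
      rankOne (hA.eigenvectorBasis j) := by
  unfold matFun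
  refine Finset.sum_congr rfl fun j _ => ?_
  split <;> simp

lemma cMat_self {ρ : Matrix (Fin d) (Fin d) ℂ} (hρ : ρ.IsHermitian) (j k : Fin d) :
    cMat hρ hρ j k = if j = k then 1 else 0 := by
  rw [cMat, rankOne_mul_rankOne_basis]
  by_cases h : j = k
  · rw [if_pos h, if_pos h, trace_rankOne, inner_self_eq_norm_sq_to_K,
      hρ.eigenvectorBasis.orthonormal.1 j]
    norm_num
  · rw [if_neg h, if_neg h]; simp

lemma cMat_zero {ρ σ : Matrix (Fin d) (Fin d) ℂ} (hρ : ρ.PosSemidef) (hσ : σ.PosSemidef)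
    (hsupp : LinearMap.range ρ.mulVecLin = LinearMap.range σ.mulVecLin) {j k : Fin d}
    (hj : 0 < hρ.1.eigenvalues j) (hk : ¬ 0 < hσ.1.eigenvalues k) :
    cMat hρ.1 hσ.1 j k = 0 := by
  rw [cMat, trace_rankOne_mul_rankOne', Complex.ofReal_re]
  have h0 := inner_eigen_zero hρ hσ hsupp j k hj hk
  rw [← inner_conj_symm] at h0
  rw [show (inner ℂ (hρ.1.eigenvectorBasis j) (hσ.1.eigenvectorBasis k) : ℂ) = 0 by
    simpa using congrArg (starRingEnd ℂ) h0]
  simp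

lemma sum_cMat_pos {ρ σ : Matrix (Fin d) (Fin d) ℂ} (hρ : ρ.PosSemidef) (hσ : σ.PosSemidef)
    (hsupp : LinearMap.range ρ.mulVecLin = LinearMap.range σ.mulVecLin) {j : Fin d}
    (hj : 0 < hρ.1.eigenvalues j) :
    ∑ k, (if 0 < hσ.1.eigenvalues k then cMat hρ.1 hσ.1 j k else 0) = 1 := by
  have h1 : ∑ k, (if 0 < hσ.1.eigenvalues k then cMat hρ.1 hσ.1 j k else 0)
      = ∑ k, cMat hρ.1 hσ.1 j k := by
    refine Finset.sum_congr rfl fun k _ => ?_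
    by_cases hk : 0 < hσ.1.eigenvalues k
    · rw [if_pos hk]
    · rw [if_neg hk, cMat_zero hρ hσ hsupp hj hk]
  rw [h1]
  exact sum_trace_rankOne_basis _ _ (hρ.1.eigenvectorBasis.orthonormal.1 j)

lemma sum_eigenvalues_one {ρ : Matrix (Fin d) (Fin d) ℂ} (hρ : ρ.IsHermitian)
    (htr : ρ.trace = 1) : ∑ j, hρ.eigenvalues j = 1 := by
  have h : ρ.trace = ((∑ j, hρ.eigenvalues j : ℝ) : ℂ) := by
    conv_lhs => rw [spectral hρ]
    rw [Matrix.trace_sum]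
    push_cast
    refine Finset.sum_congr rfl fun j _ => ?_
    rw [Matrix.trace_smul, trace_rankOne, inner_self_eq_norm_sq_to_K,
      hρ.eigenvectorBasis.orthonormal.1 j]
    norm_num
  rw [h] at htr
  exact_mod_cast htr

lemma trace_mul_matFun {ρ σ : Matrix (Fin d) (Fin d) ℂ} (hρ : ρ.IsHermitian)
    (hσ : σ.IsHermitian) (g : ℝ → ℝ) :
    (Matrix.trace (ρ * matFun g hσ)).re = ∑ j, ∑ k, hρ.eigenvalues j *
      (if 0 < hσ.eigenvalues k then g (hσ.eigenvalues k) else 0) * cMat hρ hσ j k := by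
  conv_lhs => rw [spectral hρ, matFun_eq]
  rw [trace_re_expand]
  rfl

lemma relEnt_eq_S {ρ σ : Matrix (Fin d) (Fin d) ℂ} (hρ : ρ.PosSemidef) (hσ : σ.PosSemidef)
    (hsupp : LinearMap.range ρ.mulVecLin = LinearMap.range σ.mulVecLin) :
    relEnt hρ.1 hσ.1 = S hρ.1.eigenvalues hσ.1.eigenvalues (cMat hρ.1 hσ.1)
      (fun x => -Real.logb 2 x) := by
  have t1 : (Matrix.trace (ρ * matFun (Real.logb 2) hρ.1)).re
      = ∑ j, (if 0 < hρ.1.eigenvalues j then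
          hρ.1.eigenvalues j * Real.logb 2 (hρ.1.eigenvalues j) else 0) := by
    rw [trace_mul_matFun hρ.1 hρ.1]
    refine Finset.sum_congr rfl fun j _ => ?_
    rw [Finset.sum_eq_single j]
    · rw [cMat_self]
      by_cases hj : 0 < hρ.1.eigenvalues j <;> simp [hj]
    · intro k _ hk
      rw [cMat_self hρ.1 j k, if_neg (show ¬ j = k from fun h => hk h.symm)]
      ring
    · simp
  have t2 := trace_mul_matFun hρ.1 hσ.1 (Real.logb 2)
  rw [relEnt, Matrix.mul_sub, Matrix.trace_sub, Complex.sub_re, t1, t2, S,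
    ← Finset.sum_sub_distrib]
  refine Finset.sum_congr rfl fun j _ => ?_
  by_cases hj : 0 < hρ.1.eigenvalues j
  · rw [if_pos hj]
    have hrw : hρ.1.eigenvalues j * Real.logb 2 (hρ.1.eigenvalues j)
        = ∑ k, (if 0 < hσ.1.eigenvalues k then
            hρ.1.eigenvalues j * Real.logb 2 (hρ.1.eigenvalues j) * cMat hρ.1 hσ.1 j k
          else 0) := by
      calc hρ.1.eigenvalues j * Real.logb 2 (hρ.1.eigenvalues j)
          = hρ.1.eigenvalues j * Real.logb 2 (hρ.1.eigenvalues j) *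
            ∑ k, (if 0 < hσ.1.eigenvalues k then cMat hρ.1 hσ.1 j k else 0) := by
            rw [sum_cMat_pos hρ hσ hsupp hj, mul_one]
        _ = _ := by
            rw [Finset.mul_sum]
            refine Finset.sum_congr rfl fun k _ => ?_
            by_cases hk : 0 < hσ.1.eigenvalues k <;> simp [hk, mul_assoc]
    rw [hrw, ← Finset.sum_sub_distrib]
    refine Finset.sum_congr rfl fun k _ => ?_
    by_cases hk : 0 < hσ.1.eigenvalues k
    · rw [if_pos hk, if_pos hk, if_pos ⟨hj, hk⟩, Real.logb_div hk.ne' hj.ne']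
      ring
    · rw [if_neg hk, if_neg hk, if_neg (fun h => hk h.2)]
      simp
  · have hj0 : hρ.1.eigenvalues j = 0 :=
      le_antisymm (not_lt.1 hj) (hρ.eigenvalues_nonneg j)
    rw [if_neg hj]
    simp [hj, hj0]

lemma Qzero_eq {ρ σ : Matrix (Fin d) (Fin d) ℂ} (hρ : ρ.PosSemidef) (hσ : σ.PosSemidef) :
    Qzero hρ.1 σ = ∑ j, ∑ k,
      (if 0 < hρ.1.eigenvalues j ∧ 0 < hσ.1.eigenvalues k then
        hσ.1.eigenvalues k * cMat hρ.1 hσ.1 j k else 0) := by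
  rw [Qzero, suppProj]
  conv_lhs => rw [spectral hσ.1, matFun_eq]
  rw [trace_re_expand]
  refine Finset.sum_congr rfl fun j _ => Finset.sum_congr rfl fun k _ => ?_
  by_cases hj : 0 < hρ.1.eigenvalues j
  · by_cases hk : 0 < hσ.1.eigenvalues k
    · simp only [if_pos hj, if_pos (And.intro hj hk)]
      show 1 * hσ.1.eigenvalues k * cMat hρ.1 hσ.1 j k = _
      ring
    · have hk0 : hσ.1.eigenvalues k = 0 :=
        le_antisymm (not_lt.1 hk) (hσ.eigenvalues_nonneg k)
      simp [hj, hk, hk0]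
  · simp [hj]

lemma Qtwo_eq {ρ σ : Matrix (Fin d) (Fin d) ℂ} (hρ : ρ.PosSemidef) (hσ : σ.PosSemidef) :
    Qtwo ρ hσ.1 = ∑ j, ∑ k,
      (if 0 < hρ.1.eigenvalues j ∧ 0 < hσ.1.eigenvalues k then
        hρ.1.eigenvalues j ^ 2 * (hσ.1.eigenvalues k)⁻¹ * cMat hρ.1 hσ.1 j k else 0) := by
  rw [Qtwo]
  have hsq : ρ * ρ = ∑ j, ((hρ.1.eigenvalues j ^ 2 : ℝ) : ℂ) •
      rankOne (hρ.1.eigenvectorBasis j) := by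
    rw [sq_spectral hρ.1]
    push_cast
    rfl
  conv_lhs => rw [hsq, matFun_eq]
  rw [trace_re_expand]
  refine Finset.sum_congr rfl fun j _ => Finset.sum_congr rfl fun k _ => ?_
  by_cases hj : 0 < hρ.1.eigenvalues j
  · by_cases hk : 0 < hσ.1.eigenvalues k
    · simp [hj, hk, cMat]
    · simp [hk, fun h : _ ∧ _ => hk h.2]
  · have hj0 : hρ.1.eigenvalues j = 0 :=
      le_antisymm (not_lt.1 hj) (hρ.eigenvalues_nonneg j)
    simp [hj, hj0]

lemma sum_pairs_eta {ρ σ : Matrix (Fin d) (Fin d) ℂ} (hρ : ρ.PosSemidef) (hσ : σ.PosSemidef)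
    (hsupp : LinearMap.range ρ.mulVecLin = LinearMap.range σ.mulVecLin) (htr : ρ.trace = 1) :
    ∑ j, ∑ k, (if 0 < hρ.1.eigenvalues j ∧ 0 < hσ.1.eigenvalues k then
      hρ.1.eigenvalues j * cMat hρ.1 hσ.1 j k else 0) = 1 := by
  have hterm : ∀ j, ∑ k, (if 0 < hρ.1.eigenvalues j ∧ 0 < hσ.1.eigenvalues k then
      hρ.1.eigenvalues j * cMat hρ.1 hσ.1 j k else 0) = hρ.1.eigenvalues j := by
    intro j
    by_cases hj : 0 < hρ.1.eigenvalues j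
    · calc ∑ k, (if 0 < hρ.1.eigenvalues j ∧ 0 < hσ.1.eigenvalues k then
            hρ.1.eigenvalues j * cMat hρ.1 hσ.1 j k else 0)
          = hρ.1.eigenvalues j *
            ∑ k, (if 0 < hσ.1.eigenvalues k then cMat hρ.1 hσ.1 j k else 0) := by
            rw [Finset.mul_sum]
            refine Finset.sum_congr rfl fun k _ => ?_
            by_cases hk : 0 < hσ.1.eigenvalues k <;> simp [hj, hk]
        _ = hρ.1.eigenvalues j := by rw [sum_cMat_pos hρ hσ hsupp hj, mul_one]
    · have hj0 : hρ.1.eigenvalues j = 0 :=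
        le_antisymm (not_lt.1 hj) (hρ.eigenvalues_nonneg j)
      simp [hj, hj0]
  rw [Finset.sum_congr rfl (fun j _ => hterm j)]
  exact sum_eigenvalues_one hρ.1 htr

lemma S_sum_weighted {m : ℕ} (η μ : Fin d → ℝ) (c : Fin d → Fin d → ℝ)
    (a : Fin m → ℝ) (f : Fin m → ℝ → ℝ) :
    ∑ i, a i * S η μ c (f i) = S η μ c (fun x => ∑ i, a i * f i x) := by
  unfold S
  simp only [Finset.mul_sum]
  rw [Finset.sum_comm]
  refine Finset.sum_congr rfl fun j _ => ?_
  rw [Finset.sum_comm]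
  refine Finset.sum_congr rfl fun k _ => ?_
  by_cases h : 0 < η j ∧ 0 < μ k
  · simp only [if_pos h]
    have hterm : ∀ i : Fin m, a i * (η j * f i (μ k / η j) * c j k)
        = (η j * c j k) * (a i * f i (μ k / η j)) := fun i => by ring
    rw [Finset.sum_congr rfl fun i _ => hterm i, ← Finset.mul_sum]
    rw [show (∑ i : Fin m, η j * (a i * f i (μ k / η j)))
        = η j * ∑ i : Fin m, a i * f i (μ k / η j) from (Finset.mul_sum _ _ _).symm]
    ring
  · simp [h]

lemma S_neg (η μ : Fin d → ℝ) (c : Fin d → Fin d → ℝ) (φ : ℝ → ℝ) :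
    -S η μ c φ = S η μ c (fun x => -φ x) := by
  unfold S
  rw [← Finset.sum_neg_distrib]
  refine Finset.sum_congr rfl fun j _ => ?_
  rw [← Finset.sum_neg_distrib]
  refine Finset.sum_congr rfl fun k _ => ?_
  by_cases h : 0 < η j ∧ 0 < μ k <;> simp [h]

lemma S_sub (η μ : Fin d → ℝ) (c : Fin d → Fin d → ℝ) (φ ψ : ℝ → ℝ) :
    S η μ c φ - S η μ c ψ = S η μ c (fun x => φ x - ψ x) := by
  unfold S
  rw [← Finset.sum_sub_distrib]
  refine Finset.sum_congr rfl fun j _ => ?_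
  rw [← Finset.sum_sub_distrib]
  refine Finset.sum_congr rfl fun k _ => ?_
  by_cases h : 0 < η j ∧ 0 < μ k
  · simp only [if_pos h]; ring
  · simp [h]

lemma S_le_S (η μ : Fin d → ℝ) (c : Fin d → Fin d → ℝ)
    (hc : ∀ j k, 0 ≤ c j k) {φ ψ : ℝ → ℝ} (h : ∀ x, 0 < x → φ x ≤ ψ x) :
    S η μ c φ ≤ S η μ c ψ := by
  refine Finset.sum_le_sum fun j _ => Finset.sum_le_sum fun k _ => ?_
  by_cases hp : 0 < η j ∧ 0 < μ k
  · rw [if_pos hp, if_pos hp]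
    exact mul_le_mul_of_nonneg_right
      (mul_le_mul_of_nonneg_left (h _ (div_pos hp.2 hp.1)) hp.1.le) (hc j k)
  · simp [hp]

lemma S_nonneg (η μ : Fin d → ℝ) (c : Fin d → Fin d → ℝ)
    (hc : ∀ j k, 0 ≤ c j k) {φ : ℝ → ℝ} (h : ∀ x, 0 < x → 0 ≤ φ x) :
    0 ≤ S η μ c φ := by
  refine Finset.sum_nonneg fun j _ => Finset.sum_nonneg fun k _ => ?_
  by_cases hp : 0 < η j ∧ 0 < μ k
  · rw [if_pos hp]
    exact mul_nonneg (mul_nonneg hp.1.le (h _ (div_pos hp.2 hp.1))) (hc j k)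
  · simp [hp]


/-- Quadrature error bound: `0 ≤ D_{−r_m}(ρ‖σ) − D(ρ‖σ) ≤ (Q₀ + Q₂ − 2)/(m² ln 2)`. -/
theorem quadrature_error_relEnt (ρ σ : Matrix (Fin d) (Fin d) ℂ)
    (hρ : IsState ρ) (hσ : IsState σ)
    (hsupp : LinearMap.range ρ.mulVecLin = LinearMap.range σ.mulVecLin)
    (m : ℕ) (hm : 1 ≤ m) (t w : Fin m → ℝ)
    (ht : ∀ j, t j ∈ Set.Icc (0 : ℝ) 1) (hw : ∀ j, 0 < w j)
    (happrox : ∀ x > (0 : ℝ),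
      -((1 / Real.log 2) * ∑ j, w j * ft (t j) x) -
          (1 / ((m : ℝ) ^ 2 * Real.log 2)) * (1 / x + x - 2) ≤ -Real.logb 2 x ∧
        -Real.logb 2 x ≤ -((1 / Real.log 2) * ∑ j, w j * ft (t j) x)) :
    0 ≤ (-∑ j, (w j / Real.log 2) * Df (ft (t j)) hρ.1.1 hσ.1.1) -
        relEnt hρ.1.1 hσ.1.1 ∧
      (-∑ j, (w j / Real.log 2) * Df (ft (t j)) hρ.1.1 hσ.1.1) -
          relEnt hρ.1.1 hσ.1.1 ≤
        (Qzero hρ.1.1 σ + Qtwo ρ hσ.1.1 - 2) / ((m : ℝ) ^ 2 * Real.log 2) := by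
  classical
  have hln2 : (0 : ℝ) < Real.log 2 := Real.log_pos one_lt_two
  have hm0 : (0 : ℝ) < (m : ℝ) := by exact_mod_cast Nat.lt_of_lt_of_le Nat.zero_lt_one hm
  have hK : (0 : ℝ) < (m : ℝ) ^ 2 * Real.log 2 := mul_pos (pow_pos hm0 2) hln2
  set K : ℝ := (m : ℝ) ^ 2 * Real.log 2 with hKdef
  set η : Fin d → ℝ := hρ.1.1.eigenvalues with hηdef
  set μ : Fin d → ℝ := hσ.1.1.eigenvalues with hμdef
  set c : Fin d → Fin d → ℝ := cMat hρ.1.1 hσ.1.1 with hcdef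
  have hc : ∀ j k, 0 ≤ c j k := fun j k => cMat_nonneg _ _ j k
  -- the pointwise function appearing in the difference
  have hA : ∀ x : ℝ, (∑ j, (w j / Real.log 2) * ft (t j) x)
      = (1 / Real.log 2) * ∑ j, w j * ft (t j) x := by
    intro x
    rw [Finset.mul_sum]
    exact Finset.sum_congr rfl fun j _ => by ring
  have hdiff : (-∑ j, (w j / Real.log 2) * Df (ft (t j)) hρ.1.1 hσ.1.1) -
      relEnt hρ.1.1 hσ.1.1
      = S η μ c (fun x => Real.logb 2 x - ∑ j, (w j / Real.log 2) * ft (t j) x) := by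
    have hDf : ∀ j, Df (ft (t j)) hρ.1.1 hσ.1.1 = S η μ c (ft (t j)) := fun j => rfl
    rw [Finset.sum_congr rfl fun j _ => by rw [hDf j]]
    rw [S_sum_weighted η μ c (fun j => w j / Real.log 2) (fun j => ft (t j))]
    rw [relEnt_eq_S hρ.1 hσ.1 hsupp]
    rw [S_neg, S_sub]
    refine congrArg _ ?_
    funext x
    ring
  constructor
  · rw [hdiff]
    refine S_nonneg η μ c hc fun x hx => ?_
    have h2 := (happrox x hx).2
    rw [hA x]
    linarith
  · rw [hdiff]
    have hstep : S η μ c (fun x => Real.logb 2 x - ∑ j, (w j / Real.log 2) * ft (t j) x)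
        ≤ S η μ c (fun x => 1 / K * (1 / x + x - 2)) := by
      refine S_le_S η μ c hc fun x hx => ?_
      have h1 := (happrox x hx).1
      rw [hA x]
      linarith
    refine le_trans hstep (le_of_eq ?_)
    -- compute S of the quadratic bound
    have step : ∀ j k : Fin d,
        (if 0 < η j ∧ 0 < μ k then η j * (1 / K * (1 / (μ k / η j) + μ k / η j - 2)) * c j k
          else 0)
        = ((if 0 < η j ∧ 0 < μ k then μ k * c j k else 0)
            + (if 0 < η j ∧ 0 < μ k then η j ^ 2 * (μ k)⁻¹ * c j k else 0)
            - 2 * (if 0 < η j ∧ 0 < μ k then η j * c j k else 0)) / K := by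
      intro j k
      by_cases hp : 0 < η j ∧ 0 < μ k
      · simp only [if_pos hp]
        have h1 : η j ≠ 0 := hp.1.ne'
        have h2 : μ k ≠ 0 := hp.2.ne'
        field_simp
        ring
      · simp [hp]
    calc S η μ c (fun x => 1 / K * (1 / x + x - 2))
        = ∑ j, ∑ k, ((if 0 < η j ∧ 0 < μ k then μ k * c j k else 0)
            + (if 0 < η j ∧ 0 < μ k then η j ^ 2 * (μ k)⁻¹ * c j k else 0)
            - 2 * (if 0 < η j ∧ 0 < μ k then η j * c j k else 0)) / K :=
          Finset.sum_congr rfl fun j _ => Finset.sum_congr rfl fun k _ => step j k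
      _ = ((∑ j, ∑ k, (if 0 < η j ∧ 0 < μ k then μ k * c j k else 0))
            + (∑ j, ∑ k, (if 0 < η j ∧ 0 < μ k then η j ^ 2 * (μ k)⁻¹ * c j k else 0))
            - 2 * (∑ j, ∑ k, (if 0 < η j ∧ 0 < μ k then η j * c j k else 0))) / K := by
          simp only [← Finset.sum_div]
          congr 1
          simp only [Finset.sum_add_distrib, Finset.sum_sub_distrib, ← Finset.mul_sum]
      _ = (Qzero hρ.1.1 σ + Qtwo ρ hσ.1.1 - 2 * 1) / K := by
          rw [← Qzero_eq hρ.1 hσ.1, ← Qtwo_eq hρ.1 hσ.1,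
            sum_pairs_eta hρ.1 hσ.1 hsupp hρ.2]
      _ = (Qzero hρ.1.1 σ + Qtwo ρ hσ.1.1 - 2) / K := by ring

end QRE
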